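/- For integers n ≥ 1 define ψ_n(p) = 2^{1−n} ∑_{k=0}^n C(n,k) (k/n)^{1/p} − 2^{1/p} for p ≥ 1. Then for every integer n > 1, ψ_n has a unique root p_n in the interval (2, ∞); moreover the sequence (p_n) is strictly monotonically decreasing and converges to 2 as n → ∞. -/

import Mathlib

open Finset Real Filter Set unitInterval

/-- `ψ_n(p) = 2^{1−n} ∑_{k=0}^n C(n,k) (k/n)^{1/p} − 2^{1/p}`. -/
noncomputable def psiN (n : ℕ) (p : ℝ) : ℝ :=
  (2 : ℝ) ^ ((1 : ℝ) - (n : ℝ)) *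
      ∑ k ∈ Finset.range (n + 1), (n.choose k : ℝ) * ((k : ℝ) / (n : ℝ)) ^ (1 / p)
    - (2 : ℝ) ^ (1 / p)

lemma psiN_strictMonoOn (n : ℕ) : StrictMonoOn (psiN n) (Set.Ici (2:ℝ)) := by
  intro p hp q hq hpq
  simp only [Set.mem_Ici] at hp hq
  have hp0 : (0:ℝ) < p := by linarith
  have hq0 : (0:ℝ) < q := by linarith
  have hinv : 1 / q < 1 / p := by
    apply one_div_lt_one_div_of_lt hp0 hpq
  have hsum : ∑ k ∈ Finset.range (n + 1), (n.choose k : ℝ) * ((k : ℝ) / (n : ℝ)) ^ (1 / p)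
      ≤ ∑ k ∈ Finset.range (n + 1), (n.choose k : ℝ) * ((k : ℝ) / (n : ℝ)) ^ (1 / q) := by
    apply Finset.sum_le_sum
    intro k hk
    rcases Nat.eq_zero_or_pos k with rfl | hk1
    · simp only [Nat.cast_zero, zero_div]
      rw [Real.zero_rpow (by positivity), Real.zero_rpow (by positivity)]
    · have hn : 0 < n := lt_of_lt_of_le hk1 (Nat.lt_succ_iff.mp (Finset.mem_range.mp hk))
      have hb0 : (0:ℝ) < (k : ℝ) / n := by positivity
      have hb1 : (k : ℝ) / n ≤ 1 := by
        rw [div_le_one (by positivity)]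
        exact_mod_cast Nat.lt_succ_iff.mp (Finset.mem_range.mp hk)
      exact mul_le_mul_of_nonneg_left
        (Real.rpow_le_rpow_of_exponent_ge hb0 hb1 hinv.le) (by positivity)
  have h2 : (2:ℝ) ^ (1/q) < 2 ^ (1/p) := Real.rpow_lt_rpow_of_exponent_lt one_lt_two hinv
  have hc : (0:ℝ) < (2:ℝ) ^ ((1:ℝ) - n) := Real.rpow_pos_of_pos two_pos _
  unfold psiN
  nlinarith [mul_le_mul_of_nonneg_left hsum hc.le]


lemma sum_mul_choose (n : ℕ) (hn : 1 ≤ n) :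
    ∑ k ∈ Finset.range (n + 1), k * n.choose k = n * 2 ^ (n - 1) := by
  obtain ⟨m, rfl⟩ := Nat.exists_eq_add_of_le hn
  rw [Finset.sum_range_succ' (fun k => k * (1+m).choose k)]
  simp only [zero_mul, add_zero]
  have h : ∀ k, (k + 1) * (1 + m).choose (k + 1) = (1 + m) * m.choose k := by
    intro k
    have := Nat.add_one_mul_choose_eq m k
    rw [mul_comm (k+1), Nat.add_comm 1 m, this, mul_comm]
  rw [Finset.sum_congr rfl (fun k _ => h k), ← Finset.mul_sum]
  have : 1 + m = m + 1 := by omega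
  rw [this, Nat.sum_range_choose]
  simp

lemma tangent (x : ℝ) (hx : 0 ≤ x) : x ^ ((1:ℝ)/2) ≤ (x + 1/2) / Real.sqrt 2 := by
  rw [show x ^ ((1:ℝ)/2) = Real.sqrt x from (Real.sqrt_eq_rpow x).symm]
  rw [le_div_iff₀ (by positivity)]
  nlinarith [Real.sq_sqrt hx, Real.sq_sqrt (by norm_num : (0:ℝ) ≤ 2),
    Real.sqrt_nonneg x, Real.sqrt_nonneg 2, sq_nonneg (Real.sqrt x * Real.sqrt 2 - 1)]

lemma psiN_two_neg (n : ℕ) (hn : 1 ≤ n) : psiN n 2 < 0 := by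
  have hn0 : (0:ℝ) < n := by exact_mod_cast hn
  have key : ∑ k ∈ Finset.range (n + 1), (n.choose k : ℝ) * ((k : ℝ) / (n : ℝ)) ^ ((1:ℝ) / 2)
      < ∑ k ∈ Finset.range (n + 1), (n.choose k : ℝ) * (((k : ℝ) / n + 1/2) / Real.sqrt 2) := by
    apply Finset.sum_lt_sum
    · intro k hk
      exact mul_le_mul_of_nonneg_left (tangent _ (by positivity)) (by positivity)
    · refine ⟨0, Finset.mem_range.mpr (by omega), ?_⟩
      simp only [Nat.cast_zero, zero_div, Nat.choose_zero_right, Nat.cast_one, one_mul]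
      rw [Real.zero_rpow (by norm_num)]
      positivity
  have hsum1 : ∑ k ∈ Finset.range (n + 1), (n.choose k : ℝ) * ((k : ℝ) / n)
      = 2 ^ (n - 1) := by
    have := sum_mul_choose n hn
    have h2 : ∑ k ∈ Finset.range (n + 1), (n.choose k : ℝ) * ((k : ℝ) / n)
        = (∑ k ∈ Finset.range (n + 1), (k * n.choose k : ℕ)) / n := by
      push_cast
      rw [Finset.sum_div]
      apply Finset.sum_congr rfl
      intro k _
      ring
    rw [h2, this]
    push_cast
    field_simp
  have hsum2 : ∑ k ∈ Finset.range (n + 1), (n.choose k : ℝ) = 2 ^ n := by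
    exact_mod_cast Nat.sum_range_choose n
  have hbound : ∑ k ∈ Finset.range (n + 1), (n.choose k : ℝ) * (((k : ℝ) / n + 1/2) / Real.sqrt 2)
      = 2 ^ n / Real.sqrt 2 := by
    have : ∀ k, (n.choose k : ℝ) * (((k : ℝ) / n + 1/2) / Real.sqrt 2)
        = ((n.choose k : ℝ) * ((k:ℝ)/n)) / Real.sqrt 2 + ((n.choose k : ℝ) * (1/2)) / Real.sqrt 2 := by
      intro k; ring
    rw [Finset.sum_congr rfl (fun k _ => this k), Finset.sum_add_distrib,
      ← Finset.sum_div, ← Finset.sum_div, hsum1, ← Finset.sum_mul, hsum2]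
    obtain ⟨m, rfl⟩ := Nat.exists_eq_add_of_le hn
    have : 1 + m - 1 = m := by omega
    rw [this]
    rw [pow_add]
    ring
  -- now conclude
  have hs2 : Real.sqrt 2 = (2:ℝ) ^ ((1:ℝ)/2) := by
    rw [Real.sqrt_eq_rpow]
  have hcpos : (0:ℝ) < (2:ℝ) ^ ((1:ℝ) - n) := Real.rpow_pos_of_pos two_pos _
  unfold psiN
  rw [show (1:ℝ)/(2:ℝ) = ((1:ℝ)/2) from rfl]
  have hlt : (2:ℝ) ^ ((1:ℝ) - n) * ∑ k ∈ Finset.range (n + 1), (n.choose k : ℝ) * ((k : ℝ) / (n : ℝ)) ^ ((1:ℝ) / 2)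
      < (2:ℝ) ^ ((1:ℝ) - n) * (2 ^ n / Real.sqrt 2) := by
    apply mul_lt_mul_of_pos_left _ hcpos
    rw [← hbound]
    exact key
  have heq : (2:ℝ) ^ ((1:ℝ) - n) * (2 ^ n / Real.sqrt 2) = 2 / Real.sqrt 2 := by
    rw [show ((2:ℝ) ^ n : ℝ) = (2:ℝ) ^ (n:ℝ) from (Real.rpow_natCast 2 n).symm,
      div_eq_mul_inv, ← mul_assoc, ← Real.rpow_add two_pos]
    ring_nf
    rw [Real.rpow_one, mul_comm]
  have hfin : 2 / Real.sqrt 2 = Real.sqrt 2 := by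
    rw [eq_comm, eq_div_iff (by positivity)]
    nlinarith [Real.sq_sqrt (by norm_num : (0:ℝ) ≤ 2)]
  rw [heq, hfin, hs2] at hlt
  linarith


lemma tendsto_rpow_one_div (c : ℝ) (hc : 0 < c) :
    Tendsto (fun p : ℝ => c ^ (1 / p)) atTop (nhds 1) := by
  have h : Tendsto (fun p : ℝ => 1 / p) atTop (nhds 0) := by
    simpa [one_div] using tendsto_inv_atTop_zero (𝕜 := ℝ)
  have hcont : ContinuousAt (fun y : ℝ => c ^ y) 0 :=
    Real.continuousAt_const_rpow hc.ne'
  have := hcont.tendsto.comp h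
  simpa [Real.rpow_zero, Function.comp_def] using this

lemma psiN_tendsto_atTop (n : ℕ) (hn : 1 ≤ n) :
    Tendsto (psiN n) atTop (nhds ((2:ℝ) ^ ((1:ℝ) - n) * (2 ^ n - 1) - 1)) := by
  have hn0 : (0:ℝ) < n := by exact_mod_cast hn
  have hsum : Tendsto (fun p : ℝ => ∑ k ∈ Finset.range (n + 1),
      (n.choose k : ℝ) * ((k : ℝ) / (n : ℝ)) ^ (1 / p)) atTop
      (nhds (∑ k ∈ Finset.range (n + 1), if k = 0 then 0 else (n.choose k : ℝ))) := by
    apply tendsto_finset_sum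
    intro k hk
    rcases Nat.eq_zero_or_pos k with rfl | hk1
    · simp only [Nat.cast_zero, zero_div, if_pos rfl]
      apply Tendsto.congr' _ tendsto_const_nhds
      filter_upwards [eventually_gt_atTop (0:ℝ)] with p hp
      rw [Real.zero_rpow (by positivity)]
      simp
    · have hc : (0:ℝ) < (k:ℝ)/n := by positivity
      have := (tendsto_rpow_one_div _ hc).const_mul (n.choose k : ℝ)
      simp only [if_neg (by omega : k ≠ 0), mul_one] at this ⊢
      exact this
  have hsum_eq : (∑ k ∈ Finset.range (n + 1), if k = 0 then 0 else (n.choose k : ℝ))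
      = 2 ^ n - 1 := by
    rw [Finset.sum_range_succ' (fun k => if k = 0 then 0 else (n.choose k : ℝ))]
    simp only [if_pos rfl, add_zero, if_neg (Nat.succ_ne_zero _)]
    have h2 : (2:ℝ) ^ n = ∑ k ∈ Finset.range (n + 1), (n.choose k : ℝ) := by
      exact_mod_cast (Nat.sum_range_choose n).symm
    rw [h2, Finset.sum_range_succ' (fun k => (n.choose k : ℝ))]
    simp
  rw [hsum_eq] at hsum
  have h2exp : Tendsto (fun p : ℝ => (2:ℝ) ^ (1/p)) atTop (nhds 1) :=
    tendsto_rpow_one_div 2 two_pos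
  have := (hsum.const_mul ((2:ℝ) ^ ((1:ℝ) - n))).sub h2exp
  exact this

lemma psiN_eventually_pos (n : ℕ) (hn : 2 ≤ n) : ∃ M : ℝ, 2 < M ∧ 0 < psiN n M := by
  have hlim : (0:ℝ) < (2:ℝ) ^ ((1:ℝ) - n) * (2 ^ n - 1) - 1 := by
    have h1 : (2:ℝ) ^ ((1:ℝ) - n) * (2 ^ n) = 2 ^ ((1:ℝ) - n + n) := by
      rw [Real.rpow_add two_pos, Real.rpow_natCast]
    have h2 : (2:ℝ) ^ ((1:ℝ) - n + n) = 2 := by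
      norm_num
    have h3 : (2:ℝ) ^ ((1:ℝ) - n) < 1 := by
      apply Real.rpow_lt_one_of_one_lt_of_neg one_lt_two
      have : (2:ℝ) ≤ n := by exact_mod_cast hn
      linarith
    have h4 : (0:ℝ) < (2:ℝ) ^ ((1:ℝ) - n) := Real.rpow_pos_of_pos two_pos _
    nlinarith
  have hev : ∀ᶠ p : ℝ in atTop, 0 < psiN n p :=
    (psiN_tendsto_atTop n (by omega)).eventually (eventually_gt_nhds hlim)
  obtain ⟨M, hM⟩ := (hev.and (eventually_gt_atTop (2:ℝ))).exists
  exact ⟨M, hM.2, hM.1⟩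


lemma contOn_const_rpow_one_div (c : ℝ) (hc : 0 < c) :
    ContinuousOn (fun p : ℝ => c ^ (1 / p)) (Set.Ici (2:ℝ)) := by
  have hfun : ∀ p ∈ Set.Ici (2:ℝ), c ^ (1/p) = Real.exp (Real.log c * (1/p)) := by
    intro p hp
    rw [Real.rpow_def_of_pos hc]
  apply ContinuousOn.congr _ hfun
  apply Real.continuous_exp.comp_continuousOn
  apply ContinuousOn.mul continuousOn_const
  apply ContinuousOn.div continuousOn_const continuousOn_id
  intro p hp
  simp only [Set.mem_Ici] at hp
  simp only [id_eq]
  exact ne_of_gt (by linarith)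

lemma psiN_contOn (n : ℕ) : ContinuousOn (psiN n) (Set.Ici (2:ℝ)) := by
  unfold psiN
  apply ContinuousOn.sub
  · apply ContinuousOn.mul continuousOn_const
    apply continuousOn_finset_sum
    intro k hk
    rcases Nat.eq_zero_or_pos k with rfl | hk1
    · apply ContinuousOn.congr (continuousOn_const (c := (0:ℝ)))
      intro p hp
      simp only [Set.mem_Ici] at hp
      simp only [Nat.cast_zero, zero_div]
      rw [Real.zero_rpow (by positivity)]
      simp
    · rcases Nat.eq_zero_or_pos n with rfl | hn
      · have := Finset.mem_range.mp hk; omega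
      · have hc : (0:ℝ) < (k:ℝ)/n := by positivity
        exact (contOn_const_rpow_one_div _ hc).const_smul (n.choose k : ℝ) |>.congr
          (fun p hp => by simp [smul_eq_mul])
  · exact contOn_const_rpow_one_div 2 two_pos


lemma combo_identity (n k : ℕ) (hn : 1 ≤ n) (hk : k ≤ n) :
    ((n.choose k : ℝ) / ((n+1).choose (k+1) : ℝ)) * ((k:ℝ)/n)
      + ((n.choose (k+1) : ℝ) / ((n+1).choose (k+1) : ℝ)) * (((k:ℝ)+1)/n)
      = ((k:ℝ)+1)/((n:ℝ)+1) := by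
  have hT : 0 < ((n+1).choose (k+1)) := Nat.choose_pos (by omega)
  have hTr : (0:ℝ) < ((n+1).choose (k+1) : ℝ) := by exact_mod_cast hT
  have hn0 : (0:ℝ) < (n:ℝ) := by exact_mod_cast hn
  have h1 : (n.choose (k+1) : ℝ) * ((k:ℝ)+1) = (n.choose k : ℝ) * ((n:ℝ) - k) := by
    have := Nat.choose_succ_right_eq n k
    have hcast : ((n.choose (k+1) * (k+1) : ℕ) : ℝ) = ((n.choose k * (n - k) : ℕ) : ℝ) := by
      exact_mod_cast this
    push_cast [Nat.cast_sub hk] at hcast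
    linarith
  have h2 : ((k:ℝ)+1) * ((n+1).choose (k+1) : ℝ) = ((n:ℝ)+1) * (n.choose k : ℝ) := by
    have := Nat.add_one_mul_choose_eq n k
    have hcast : (((n+1) * n.choose k : ℕ) : ℝ) = (((n+1).choose (k+1) * (k+1) : ℕ) : ℝ) := by
      exact_mod_cast this
    push_cast at hcast
    linarith
  field_simp
  nlinarith [h1, h2, hTr, hn0]

lemma per_term_le (n k : ℕ) (hn : 1 ≤ n) (hk : k ≤ n) {t : ℝ} (ht0 : 0 < t) (ht1 : t < 1) :
    (n.choose k : ℝ) * ((k:ℝ)/n) ^ t + (n.choose (k+1) : ℝ) * (((k:ℝ)+1)/n) ^ t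
      ≤ ((n+1).choose (k+1) : ℝ) * (((k:ℝ)+1)/((n:ℝ)+1)) ^ t := by
  have hT : (0:ℝ) < ((n+1).choose (k+1) : ℝ) := by
    exact_mod_cast Nat.choose_pos (show k+1 ≤ n+1 by omega)
  have hn0 : (0:ℝ) < (n:ℝ) := by exact_mod_cast hn
  have hab : (n.choose k : ℝ) / ((n+1).choose (k+1) : ℝ)
      + (n.choose (k+1) : ℝ) / ((n+1).choose (k+1) : ℝ) = 1 := by
    rw [← add_div, div_eq_one_iff_eq hT.ne']
    have := Nat.choose_succ_succ (n) (k)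
    push_cast [this]
    ring
  have hconc := (Real.strictConcaveOn_rpow ht0 ht1).concaveOn
  have hx : ((k:ℝ)/n) ∈ Set.Ici (0:ℝ) := Set.mem_Ici.mpr (by positivity)
  have hy : (((k:ℝ)+1)/n) ∈ Set.Ici (0:ℝ) := Set.mem_Ici.mpr (by positivity)
  have ha0 : (0:ℝ) ≤ (n.choose k : ℝ) / ((n+1).choose (k+1) : ℝ) := by positivity
  have hb0 : (0:ℝ) ≤ (n.choose (k+1) : ℝ) / ((n+1).choose (k+1) : ℝ) := by positivity
  have hj := hconc.2 hx hy ha0 hb0 hab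
  simp only [smul_eq_mul] at hj
  rw [combo_identity n k hn hk] at hj
  calc (n.choose k : ℝ) * ((k:ℝ)/n) ^ t + (n.choose (k+1) : ℝ) * (((k:ℝ)+1)/n) ^ t
      = ((n+1).choose (k+1) : ℝ) *
        ((n.choose k : ℝ) / ((n+1).choose (k+1) : ℝ) * ((k:ℝ)/n) ^ t
          + (n.choose (k+1) : ℝ) / ((n+1).choose (k+1) : ℝ) * (((k:ℝ)+1)/n) ^ t) := by
        field_simp
    _ ≤ ((n+1).choose (k+1) : ℝ) * (((k:ℝ)+1)/((n:ℝ)+1)) ^ t :=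
        mul_le_mul_of_nonneg_left hj hT.le

lemma per_term_lt (n : ℕ) (hn : 1 ≤ n) {t : ℝ} (ht0 : 0 < t) (ht1 : t < 1) :
    (n.choose 0 : ℝ) * ((0:ℝ)/n) ^ t + (n.choose 1 : ℝ) * (((0:ℝ)+1)/n) ^ t
      < ((n+1).choose 1 : ℝ) * (((0:ℝ)+1)/((n:ℝ)+1)) ^ t := by
  have hn0 : (0:ℝ) < (n:ℝ) := by exact_mod_cast hn
  have hstrict := Real.strictConcaveOn_rpow ht0 ht1
  have hxy : (0:ℝ) ≠ 1/(n:ℝ) := ne_of_lt (one_div_pos.mpr hn0)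
  have ha0 : (0:ℝ) < 1/((n:ℝ)+1) := by exact one_div_pos.mpr (by linarith)

  have hb0 : (0:ℝ) < (n:ℝ)/((n:ℝ)+1) := by positivity
  have hab : 1/((n:ℝ)+1) + (n:ℝ)/((n:ℝ)+1) = 1 := by field_simp; ring
  have hj := hstrict.2 (Set.mem_Ici.mpr le_rfl)
    (Set.mem_Ici.mpr (le_of_lt (one_div_pos.mpr hn0))) hxy ha0 hb0 hab
  simp only [smul_eq_mul] at hj
  have hcombo : 1/((n:ℝ)+1) * 0 + (n:ℝ)/((n:ℝ)+1) * (1/(n:ℝ)) = 1/((n:ℝ)+1) := by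
    field_simp; ring
  rw [hcombo] at hj
  have hz : ((0:ℝ))^t = 0 := Real.zero_rpow ht0.ne'
  have hj2 := mul_lt_mul_of_pos_left hj (by positivity : (0:ℝ) < (n:ℝ)+1)
  simp only [Nat.choose_zero_right, Nat.choose_one_right, Nat.cast_one, zero_div, zero_add,
    Nat.choose_self]
  push_cast
  rw [hz] at hj2 ⊢
  have e1 : ((n:ℝ)+1) * (1/((n:ℝ)+1) * 0 + (n:ℝ)/((n:ℝ)+1) * (1/(n:ℝ)) ^ t)
      = (n:ℝ) * (1/(n:ℝ)) ^ t := by field_simp; ring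
  rw [e1] at hj2
  norm_num at hj2 ⊢
  linarith

noncomputable def SB (n : ℕ) (t : ℝ) : ℝ :=
  ∑ k ∈ Finset.range (n + 1), (n.choose k : ℝ) * ((k : ℝ) / (n : ℝ)) ^ t

lemma SB_step (n : ℕ) (hn : 1 ≤ n) {t : ℝ} (ht0 : 0 < t) (ht1 : t < 1) :
    2 * SB n t < SB (n+1) t := by
  have hz : ((0:ℝ))^t = 0 := Real.zero_rpow ht0.ne'
  set g : ℕ → ℝ := fun k => (n.choose k : ℝ) * ((k : ℝ) / (n : ℝ)) ^ t with hg
  have hg0 : g 0 = 0 := by simp [hg, hz]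
  have hgtop : g (n+1) = 0 := by
    simp [hg, Nat.choose_succ_self]
  have hS : SB n t = ∑ k ∈ Finset.range (n+1), g (k+1) := by
    rw [SB, ← hg, Finset.sum_range_succ (fun k => g (k+1)) n, hgtop, add_zero,
      Finset.sum_range_succ' g n, hg0, add_zero]
  have hS2 : SB (n+1) t = ∑ k ∈ Finset.range (n+1),
      ((n+1).choose (k+1) : ℝ) * (((k:ℝ)+1) / ((n:ℝ)+1)) ^ t := by
    rw [SB, Finset.sum_range_succ' (fun j => ((n+1).choose j : ℝ) * ((j : ℝ) / ((n:ℕ)+1 : ℕ) : ℝ) ^ t) (n+1)]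
    push_cast
    rw [zero_div, hz]
    simp
  have key : ∑ k ∈ Finset.range (n+1), (g k + g (k+1))
      < ∑ k ∈ Finset.range (n+1), ((n+1).choose (k+1) : ℝ) * (((k:ℝ)+1) / ((n:ℝ)+1)) ^ t := by
    apply Finset.sum_lt_sum
    · intro k hk
      have hk' : k ≤ n := Nat.lt_succ_iff.mp (Finset.mem_range.mp hk)
      have := per_term_le n k hn hk' ht0 ht1
      simp only [hg]
      push_cast
      convert this using 3 <;> push_cast <;> ring
    · refine ⟨0, Finset.mem_range.mpr (by omega), ?_⟩
      have := per_term_lt n hn ht0 ht1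
      simp only [hg]
      push_cast
      convert this using 3 <;> push_cast
      · rfl
      · ring
  rw [hS2]
  calc 2 * SB n t = ∑ k ∈ Finset.range (n+1), (g k + g (k+1)) := by
        rw [Finset.sum_add_distrib, ← hS]
        rw [SB, ← hg]
        ring
    _ < _ := key


lemma psiN_tendsto_n {t : ℝ} (ht0 : 0 < t) (ht1 : t < 1) :
    Tendsto (fun n : ℕ => (2:ℝ) ^ ((1:ℝ) - (n:ℝ)) *
      ∑ k ∈ Finset.range (n + 1), (n.choose k : ℝ) * ((k : ℝ) / (n : ℝ)) ^ t)
      atTop (nhds (2 * ((1/2:ℝ)) ^ t)) := by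
  have hcont : Continuous (fun x : ℝ => x ^ t) := by
    rw [continuous_iff_continuousAt]
    intro x
    exact Real.continuousAt_rpow_const x t (Or.inr ht0.le)
  set f : C(I, ℝ) := ⟨fun x => (x:ℝ) ^ t, hcont.comp continuous_subtype_val⟩ with hf
  set x₀ : I := ⟨1/2, by constructor <;> norm_num⟩ with hx₀
  have h := bernsteinApproximation_uniform f
  have heval : Tendsto (fun n => (bernsteinApproximation n f) x₀) atTop (nhds (f x₀)) :=
    ((continuous_eval_const x₀).tendsto f).comp h
  have hval : ∀ n : ℕ, (bernsteinApproximation n f) x₀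
      = (2:ℝ)⁻¹ ^ n * ∑ k ∈ Finset.range (n + 1), (n.choose k : ℝ) * ((k : ℝ) / (n : ℝ)) ^ t := by
    intro n
    rw [bernsteinApproximation]
    rw [ContinuousMap.sum_apply]
    rw [Finset.mul_sum]
    rw [← Fin.sum_univ_eq_sum_range (fun k => (2:ℝ)⁻¹ ^ n * ((n.choose k : ℝ) * ((k : ℝ) / (n : ℝ)) ^ t))]
    apply Finset.sum_congr rfl
    intro k _
    have hk : (k:ℕ) ≤ n := Fin.is_le k
    have hber : bernstein n k x₀ = (n.choose k : ℝ) * (2:ℝ)⁻¹ ^ n := by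
      rw [bernstein_apply]
      have hx : (x₀ : ℝ) = 1/2 := rfl
      rw [hx]
      have : (1 - (1:ℝ)/2) = 1/2 := by norm_num
      rw [this]
      rw [div_pow, div_pow, one_pow, one_pow, one_div, one_div, mul_assoc,
        ← mul_inv, ← pow_add, Nat.add_sub_cancel' hk, inv_pow]
    have hfz : f (bernstein.z k) = ((k : ℝ) / (n : ℝ)) ^ t := rfl
    rw [smul_eq_mul, ContinuousMap.mul_apply, ContinuousMap.const_apply, hfz, hber]
    ring
  have hfx : f x₀ = ((1/2:ℝ)) ^ t := rfl
  rw [hfx] at heval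
  have : ∀ n : ℕ, (2:ℝ) ^ ((1:ℝ) - (n:ℝ)) *
      ∑ k ∈ Finset.range (n + 1), (n.choose k : ℝ) * ((k : ℝ) / (n : ℝ)) ^ t
      = 2 * (bernsteinApproximation n f) x₀ := by
    intro n
    rw [hval n]
    have h2 : (2:ℝ) ^ ((1:ℝ) - (n:ℝ)) = 2 * (2:ℝ)⁻¹ ^ n := by
      rw [Real.rpow_sub two_pos, Real.rpow_one, Real.rpow_natCast, inv_pow]
      ring
    rw [h2]
    ring
  rw [show (2 * ((1/2:ℝ)) ^ t) = 2 * ((1/2:ℝ)) ^ t from rfl]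
  apply Tendsto.congr (fun n => (this n).symm)
  exact heval.const_mul 2

lemma psiN_eq (n : ℕ) (p : ℝ) :
    psiN n p = (2:ℝ) ^ ((1:ℝ) - (n:ℝ)) * SB n (1/p) - (2:ℝ) ^ (1/p) := rfl

lemma exists_root (n : ℕ) (hn : 2 ≤ n) : ∃ p : ℝ, 2 < p ∧ psiN n p = 0 := by
  obtain ⟨M, hM2, hMpos⟩ := psiN_eventually_pos n hn
  have hcont : ContinuousOn (psiN n) (Set.Icc 2 M) :=
    (psiN_contOn n).mono (fun x hx => hx.1)
  have hneg : psiN n 2 < 0 := psiN_two_neg n (by omega)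
  have := intermediate_value_Ioo hM2.le hcont (Set.mem_Ioo.mpr ⟨hneg, hMpos⟩)
  obtain ⟨p, hp, hp0⟩ := this
  exact ⟨p, hp.1, hp0⟩

noncomputable def pnSeq : ℕ → ℝ := fun n =>
  if h : 2 ≤ n then (exists_root n h).choose else 3

lemma pnSeq_spec (n : ℕ) (hn : 2 ≤ n) : 2 < pnSeq n ∧ psiN n (pnSeq n) = 0 := by
  rw [pnSeq, dif_pos hn]
  exact (exists_root n hn).choose_spec

lemma pnSeq_unique (n : ℕ) (hn : 2 ≤ n) (q : ℝ) (hq : 2 < q) (hq0 : psiN n q = 0) :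
    q = pnSeq n := by
  obtain ⟨h1, h2⟩ := pnSeq_spec n hn
  exact (psiN_strictMonoOn n).injOn (Set.mem_Ici.mpr hq.le) (Set.mem_Ici.mpr h1.le)
    (hq0.trans h2.symm)

lemma psiN_succ_pos_of_root (n : ℕ) (hn : 2 ≤ n) {p : ℝ} (hp : 2 < p)
    (hroot : psiN n p = 0) : 0 < psiN (n+1) p := by
  have hp0 : (0:ℝ) < p := by linarith
  have ht0 : 0 < 1/p := by positivity
  have ht1 : 1/p < 1 := by
    rw [div_lt_one hp0]; linarith
  have hstep := SB_step n (by omega) ht0 ht1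
  have hpow : (2:ℝ) ^ ((1:ℝ) - ((n:ℕ):ℝ)) = (2:ℝ) ^ ((1:ℝ) - (((n+1:ℕ)):ℝ)) * 2 := by
    have h' : (2:ℝ) ^ ((1:ℝ) - (((n+1:ℕ)):ℝ)) * 2 = 2 ^ ((1:ℝ) - ((n+1:ℕ):ℝ) + 1) := by
      rw [Real.rpow_add two_pos, Real.rpow_one]
    rw [h']
    congr 1
    push_cast
    ring
  have hppos : (0:ℝ) < (2:ℝ) ^ ((1:ℝ) - (((n+1:ℕ)):ℝ)) := Real.rpow_pos_of_pos two_pos _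
  rw [psiN_eq] at hroot ⊢
  rw [hpow] at hroot
  nlinarith [mul_lt_mul_of_pos_left hstep hppos]

lemma pnSeq_succ_lt (n : ℕ) (hn : 2 ≤ n) : pnSeq (n+1) < pnSeq n := by
  obtain ⟨h1, h2⟩ := pnSeq_spec n hn
  obtain ⟨h1', h2'⟩ := pnSeq_spec (n+1) (by omega)
  have hpos := psiN_succ_pos_of_root n hn h1 h2
  rcases lt_trichotomy (pnSeq (n+1)) (pnSeq n) with h | h | h
  · exact h
  · rw [h] at h2'; linarith
  · have := (psiN_strictMonoOn (n+1)) (Set.mem_Ici.mpr h1.le) (Set.mem_Ici.mpr h1'.le) h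
    rw [h2'] at this
    linarith

lemma pnSeq_antitone {N n : ℕ} (hN : 2 ≤ N) (h : N ≤ n) : pnSeq n ≤ pnSeq N := by
  induction n, h using Nat.le_induction with
  | base => exact le_refl _
  | succ m hm ih => exact le_trans (pnSeq_succ_lt m (by omega)).le ih

theorem stmt7 :
    ∃ pn : ℕ → ℝ,
      (∀ n : ℕ, 2 ≤ n →
        pn n ∈ Set.Ioi (2 : ℝ) ∧ psiN n (pn n) = 0 ∧
          ∀ q ∈ Set.Ioi (2 : ℝ), psiN n q = 0 → q = pn n) ∧
      (∀ n : ℕ, 2 ≤ n → pn (n + 1) < pn n) ∧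
      Filter.Tendsto pn Filter.atTop (nhds 2) := by
  refine ⟨pnSeq, fun n hn => ⟨(pnSeq_spec n hn).1, (pnSeq_spec n hn).2,
    fun q hq hq0 => pnSeq_unique n hn q hq hq0⟩, fun n hn => pnSeq_succ_lt n hn, ?_⟩
  rw [tendsto_order]
  constructor
  · intro a ha
    filter_upwards [eventually_ge_atTop 2] with n hn
    exact lt_trans ha (pnSeq_spec n hn).1
  · intro b hb
    set t : ℝ := 1/b with htdef
    have hb0 : (0:ℝ) < b := by linarith
    have ht0 : 0 < t := by positivity
    have ht2 : t < 1/2 := by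
      rw [htdef, div_lt_div_iff₀ hb0 two_pos]; linarith
    have hlim := psiN_tendsto_n ht0 (by linarith : t < 1)
    have hlim2 : Tendsto (fun n : ℕ => psiN n b) atTop
        (nhds (2 * ((1/2:ℝ)) ^ t - (2:ℝ) ^ t)) := by
      apply Tendsto.sub_const
      exact hlim
    have hLpos : 0 < 2 * ((1/2:ℝ)) ^ t - (2:ℝ) ^ t := by
      have h1 : ((1/2:ℝ)) ^ t = ((2:ℝ) ^ t)⁻¹ := by
        rw [one_div, Real.inv_rpow (by norm_num : (0:ℝ) ≤ 2)]
      have h2 : (2:ℝ) ^ t * (2:ℝ) ^ t = (2:ℝ) ^ (t + t) := (Real.rpow_add two_pos t t).symm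
      have h3 : (2:ℝ) ^ (t + t) < 2 := by
        nth_rewrite 2 [show (2:ℝ) = (2:ℝ) ^ (1:ℝ) from (Real.rpow_one 2).symm]
        exact Real.rpow_lt_rpow_of_exponent_lt one_lt_two (by linarith)
      have h4 : (0:ℝ) < (2:ℝ) ^ t := Real.rpow_pos_of_pos two_pos t
      rw [h1]
      have h5 : ((2:ℝ) ^ t)⁻¹ * (2:ℝ) ^ t = 1 := inv_mul_cancel₀ (ne_of_gt h4)
      nlinarith [h2, h3, h4, h5]
    have hev : ∀ᶠ n : ℕ in atTop, 0 < psiN n b :=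
      hlim2.eventually (eventually_gt_nhds hLpos)
    obtain ⟨N, hN⟩ := (hev.and (eventually_ge_atTop 2)).exists
    obtain ⟨hNpos, hN2⟩ := hN
    have hpnN : pnSeq N < b := by
      obtain ⟨h1, h2⟩ := pnSeq_spec N hN2
      rcases lt_trichotomy (pnSeq N) b with h | h | h
      · exact h
      · rw [← h] at hNpos; linarith
      · have := (psiN_strictMonoOn N) (Set.mem_Ici.mpr hb.le) (Set.mem_Ici.mpr h1.le) h
        rw [h2] at this
        linarith
    filter_upwards [eventually_ge_atTop N] with n hn
    exact lt_of_le_of_lt (pnSeq_antitone hN2 hn) hpnN
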